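/- Define τ_l(a') = E[Y¹ | A=a', L=l] − E[Y⁰ | A=a', L=l] and define γ(l) = 0 if (τ_l(1)≥0 ∧ τ_l(0)≥0) ∨ (τ_l(1)<0 ∧ τ_l(0)<0), γ(l) = 1 if τ_l(1)≥0 ∧ τ_l(0)<0, and γ(l) = 2 if τ_l(1)<0 ∧ τ_l(0)≥0. Then almost surely, g_sup(A, L) = g_opt(L) when γ(L)=0, g_sup(A, L) = A when γ(L)=1, and g_sup(A, L) = 1−A when γ(L)=2. -/

import Mathlib

open scoped Classical
open Finset

noncomputable def pr {Ω : Type*} [Fintype Ω] (p : Ω → ℝ) (E : Ω → Prop) : ℝ :=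
  ∑ ω, if E ω then p ω else 0

noncomputable def cex {Ω : Type*} [Fintype Ω] (p : Ω → ℝ) (f : Ω → ℝ) (E : Ω → Prop) : ℝ :=
  (∑ ω, if E ω then p ω * f ω else 0) / pr p E

noncomputable def ex {Ω : Type*} [Fintype Ω] (p : Ω → ℝ) (f : Ω → ℝ) : ℝ :=
  ∑ ω, p ω * f ω

noncomputable def cpr {Ω : Type*} [Fintype Ω] (p : Ω → ℝ) (E F : Ω → Prop) : ℝ :=
  pr p (fun ω => E ω ∧ F ω) / pr p F

/-- Proposition 3: the superoptimal regime can be reformulated via the function `γ`: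
follow `g_opt` when `γ(L) = 0`, follow the natural treatment when `γ(L) = 1`, and
do the opposite of the natural treatment when `γ(L) = 2`, almost surely. -/
theorem stmt5
    {Ω 𝓛 : Type*} [Fintype Ω] [Fintype 𝓛]
    (p : Ω → ℝ) (hp : ∀ ω, 0 ≤ p ω) (hsum : ∑ ω, p ω = 1)
    (Y : Bool → Ω → ℝ) (A : Ω → Bool) (L : Ω → 𝓛)
    (gopt : 𝓛 → Bool) (gsup : Bool → 𝓛 → Bool)
    (τ : Bool → 𝓛 → ℝ) (γ : 𝓛 → ℕ)
    -- positivity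
    (hpos : ∀ (a : Bool) (l : 𝓛), pr p (fun ω => L ω = l) > 0 →
      pr p (fun ω => A ω = a ∧ L ω = l) > 0)
    -- τ_l(a') = E[Y¹ | A = a', L = l] − E[Y⁰ | A = a', L = l]
    (hτ : ∀ a' l, τ a' l =
      cex p (Y true) (fun ω => A ω = a' ∧ L ω = l) -
      cex p (Y false) (fun ω => A ω = a' ∧ L ω = l))
    (hγ : ∀ l, γ l =
      if (0 ≤ τ true l ∧ 0 ≤ τ false l) ∨ (τ true l < 0 ∧ τ false l < 0) then 0
      else if 0 ≤ τ true l ∧ τ false l < 0 then 1 else 2)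
    -- optimal regime, ties broken toward `a = 1`
    (hgopt : ∀ l, gopt l =
      if cex p (Y true) (fun ω => L ω = l) ≥ cex p (Y false) (fun ω => L ω = l)
      then true else false)
    -- superoptimal regime, ties broken toward `a = 1`
    (hgsup : ∀ a' l, gsup a' l =
      if cex p (Y true) (fun ω => A ω = a' ∧ L ω = l) ≥
         cex p (Y false) (fun ω => A ω = a' ∧ L ω = l)
      then true else false) :
    ∀ ω, 0 < p ω →
      ((γ (L ω) = 0 → gsup (A ω) (L ω) = gopt (L ω)) ∧
       (γ (L ω) = 1 → gsup (A ω) (L ω) = A ω) ∧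
       (γ (L ω) = 2 → gsup (A ω) (L ω) = !(A ω))) := by
  intro ω hω
  set l := L ω with hl
  -- positivity of pr p (L = l)
  have hP : 0 < pr p (fun ω' => L ω' = l) := by
    have h1 : (if L ω = l then p ω else 0) ≤ pr p (fun ω' => L ω' = l) := by
      unfold pr
      exact Finset.single_le_sum (f := fun x => if L x = l then p x else 0)
        (fun x _ => by by_cases h : L x = l <;> simp [h, hp x]) (Finset.mem_univ ω)
    simpa [hl] using lt_of_lt_of_le (by simpa [hl] using hω) h1
  have hPa : ∀ a : Bool, 0 < pr p (fun x => A x = a ∧ L x = l) := fun a => hpos a l hP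
  -- gsup reformulated via τ
  have hgs : ∀ a' : Bool, gsup a' l = if 0 ≤ τ a' l then true else false := by
    intro a'
    rw [hgsup]
    congr 1
    simp only [hτ, ge_iff_le, sub_nonneg]
  -- splitting sums over A
  have hsplit : ∀ f : Ω → ℝ, (∑ x, if L x = l then p x * f x else 0)
      = (∑ x, if A x = true ∧ L x = l then p x * f x else 0)
      + (∑ x, if A x = false ∧ L x = l then p x * f x else 0) := by
    intro f
    rw [← Finset.sum_add_distrib]
    refine Finset.sum_congr rfl fun x _ => ?_
    cases hA : A x <;> by_cases hL : L x = l <;> simp [hA, hL]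
  have hPsplit : pr p (fun x => L x = l)
      = pr p (fun x => A x = true ∧ L x = l) + pr p (fun x => A x = false ∧ L x = l) := by
    unfold pr
    rw [← Finset.sum_add_distrib]
    refine Finset.sum_congr rfl fun x _ => ?_
    cases hA : A x <;> by_cases hL : L x = l <;> simp [hA, hL]
  have hτmul : ∀ a : Bool, τ a l * pr p (fun x => A x = a ∧ L x = l)
      = (∑ x, if A x = a ∧ L x = l then p x * Y true x else 0)
      - (∑ x, if A x = a ∧ L x = l then p x * Y false x else 0) := by
    intro a
    rw [hτ]
    unfold cex
    rw [sub_mul, div_mul_cancel₀ _ (hPa a).ne', div_mul_cancel₀ _ (hPa a).ne']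
    congr! 3
  -- key law of total expectation identity
  have key : cex p (Y true) (fun x => L x = l) - cex p (Y false) (fun x => L x = l)
      = (τ true l * pr p (fun x => A x = true ∧ L x = l)
        + τ false l * pr p (fun x => A x = false ∧ L x = l)) / pr p (fun x => L x = l) := by
    unfold cex
    rw [div_sub_div_same]
    congr 1
    rw [hτmul true, hτmul false, hsplit (Y true), hsplit (Y false)]
    ring
  have hgoptiff : gopt l = true ↔
      0 ≤ cex p (Y true) (fun x => L x = l) - cex p (Y false) (fun x => L x = l) := by
    rw [hgopt]
    simp [ge_iff_le, sub_nonneg]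
  refine ⟨?_, ?_, ?_⟩
  · -- γ = 0
    intro hc
    rw [hγ] at hc
    by_cases h0 : (0 ≤ τ true l ∧ 0 ≤ τ false l) ∨ (τ true l < 0 ∧ τ false l < 0)
    · rcases h0 with ⟨h1, h2⟩ | ⟨h1, h2⟩
      · have hdiff : 0 ≤ cex p (Y true) (fun x => L x = l) - cex p (Y false) (fun x => L x = l) := by
          rw [key]
          have := (hPa true).le
          have := (hPa false).le
          positivity
        have hgo : gopt l = true := hgoptiff.mpr hdiff
        rw [hgo, hgs]
        cases hA : A ω <;> simp [h1, h2]
      · have hdiff : cex p (Y true) (fun x => L x = l) - cex p (Y false) (fun x => L x = l) < 0 := by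
          rw [key]
          apply div_neg_of_neg_of_pos _ hP
          nlinarith [hPa true, hPa false]
        have hgo : gopt l = false := by
          rcases Bool.eq_false_or_eq_true (gopt l) with h | h
          · exact absurd (hgoptiff.mp h) (by linarith)
          · exact h
        rw [hgo, hgs]
        cases hA : A ω <;> simp [not_le.mpr h1, not_le.mpr h2]
    · simp only [if_neg h0] at hc
      split at hc <;> omega
  · -- γ = 1
    intro hc
    rw [hγ] at hc
    split at hc
    · omega
    · split at hc
      · rename_i h1
        rw [hgs]
        cases hA : A ω <;> simp [h1.1, not_le.mpr h1.2]
      · omega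
  · -- γ = 2
    intro hc
    rw [hγ] at hc
    split at hc
    · omega
    · split at hc
      · omega
      · rename_i h0 h1
        have ht : τ true l < 0 := by
          by_contra h
          exact h1 ⟨not_lt.mp h, by
            rcases not_or.mp h0 with ⟨ha, hb⟩
            rcases not_and_or.mp ha with h' | h'
            · exact absurd (not_lt.mp h) h'
            · exact not_le.mp h'⟩
        have hf : 0 ≤ τ false l := by
          rcases not_or.mp h0 with ⟨ha, hb⟩
          rcases not_and_or.mp hb with h' | h'
          · exact absurd ht h'
          · exact not_lt.mp h'
        rw [hgs]
        cases hA : A ω <;> simp [hf, not_le.mpr ht]
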